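/- Let K be a perfect field with exactly one extension of degree n for every positive integer n (so Gal(K) ≅ Ẑ), let σ be a topological generator of Gal(K), let L be a regular extension of K, and let τ ∈ Gal(L) extend σ. If M is the fixed field of τ in the algebraic closure of L, then K is algebraically closed in M, and M has a unique extension of degree n for every n (equivalently, τ is a topological generator of Gal(M) ≅ Ẑ). -/

import Mathlib

open IntermediateField Polynomial

/-- In a finite cyclic group, two subgroups with the same cardinality are equal. -/
private lemma aux_subgroup_eq_of_card_eq {G : Type*} [Group G] [Fintype G] [IsCyclic G]
    (H K : Subgroup G) (h : Nat.card H = Nat.card K) : H = K := by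
  classical
  have key : ∀ J : Subgroup G, Set.toFinset (J : Set G)
      = Finset.univ.filter (fun x : G => x ^ (Nat.card J) = 1) := by
    intro J
    have hd : 0 < Nat.card J := Nat.card_pos
    refine Finset.eq_of_subset_of_card_le ?_ ?_
    · intro x hx
      rw [Set.mem_toFinset] at hx
      refine Finset.mem_filter.2 ⟨Finset.mem_univ _, ?_⟩
      have h1 : (⟨x, hx⟩ : J) ^ (Nat.card J) = 1 := by
        rw [Nat.card_eq_fintype_card]; exact pow_card_eq_one
      exact congrArg Subtype.val h1
    · calc (Finset.univ.filter (fun x : G => x ^ (Nat.card J) = 1)).card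
          ≤ Nat.card J := IsCyclic.card_pow_eq_one_le hd
        _ = (Set.toFinset (J : Set G)).card := by
            rw [Set.toFinset_card, Nat.card_eq_fintype_card]
            exact Fintype.card_congr (Equiv.refl _)
  have h2 : Set.toFinset (H : Set G) = Set.toFinset (K : Set G) := by
    rw [key H, key K, h]
  apply SetLike.coe_injective
  rwa [← Set.toFinset_inj]

/-- If the fixed points of `σ` are exactly the base field, then on any finite normal
subextension, the restriction of `σ` generates the full automorphism group. -/
private lemma aux_zpowers_eq_top {K L : Type*} [Field K] [Field L] [Algebra K L]
    (σ : L ≃ₐ[K] L) (hσ : ∀ x : L, σ x = x → x ∈ (⊥ : IntermediateField K L))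
    (F : IntermediateField K L) [Normal K F] [FiniteDimensional K F] :
    Subgroup.zpowers (AlgEquiv.restrictNormal σ F) = ⊤ := by
  have h1 : IntermediateField.fixedField (Subgroup.zpowers (AlgEquiv.restrictNormal σ F)) = ⊥ := by
    apply le_antisymm
    · intro x hx
      have hfix : AlgEquiv.restrictNormal σ F x = x :=
        hx ⟨AlgEquiv.restrictNormal σ F, Subgroup.mem_zpowers _⟩
      have hc := AlgEquiv.restrictNormal_commutes σ F x
      rw [hfix] at hc
      have hb : (algebraMap F L x) ∈ (⊥ : IntermediateField K L) := hσ _ hc.symm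
      rw [IntermediateField.mem_bot] at hb ⊢
      obtain ⟨k, hk⟩ := hb
      refine ⟨k, ?_⟩
      apply (algebraMap F L).injective
      rw [← hk, ← IsScalarTower.algebraMap_apply]
    · intro x hx
      rw [IntermediateField.mem_bot] at hx
      obtain ⟨k, rfl⟩ := hx
      intro g
      exact (g : ↥F ≃ₐ[K] ↥F).commutes k
  have h2 := IntermediateField.fixingSubgroup_fixedField
    (Subgroup.zpowers (AlgEquiv.restrictNormal σ F))
  rw [h1] at h2
  rw [← h2]
  ext g
  simp only [Subgroup.mem_top, iff_true]
  rw [IntermediateField.fixingSubgroup, mem_fixingSubgroup_iff]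
  intro y hy
  rw [SetLike.mem_coe, IntermediateField.mem_bot] at hy
  obtain ⟨k, rfl⟩ := hy
  exact g.commutes k

set_option maxHeartbeats 1600000 in
set_option synthInstance.maxHeartbeats 400000 in
/-- Let `K` be a perfect field with exactly one extension of degree `n` (inside a fixed
algebraic closure `K̃`) for every `n ≥ 1`, let `σ` be a topological generator of the
absolute Galois group of `K` (i.e. its fixed field is exactly `K`), let `L` be a regular
extension of `K` (i.e. `K` is algebraically closed in `L`), and let `τ` be an element of
the absolute Galois group of `L` (acting on an algebraic closure `L̃` of `L`) extending
`σ`. If `M` is the fixed field of `τ` in `L̃`, then `K` is algebraically closed in `M`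
and `M` has a unique extension of degree `n` inside `L̃` for every `n ≥ 1`
(i.e. `τ` is a topological generator of `Gal(M) ≅ Ẑ`). -/
theorem fixedField_of_extension_of_generator
    (K Ktilde L Ltilde : Type*) [Field K] [Field Ktilde] [Field L] [Field Ltilde]
    [PerfectField K]
    [Algebra K Ktilde] [IsAlgClosure K Ktilde]
    [Algebra K L]
    [Algebra L Ltilde] [IsAlgClosure L Ltilde]
    [Algebra K Ltilde] [Algebra Ktilde Ltilde]
    [IsScalarTower K L Ltilde] [IsScalarTower K Ktilde Ltilde]
    (huniq : ∀ n : ℕ, 1 ≤ n →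
      ∃! E : IntermediateField K Ktilde, Module.finrank K E = n)
    (σ : Ktilde ≃ₐ[K] Ktilde)
    (hσ : ∀ x : Ktilde, σ x = x → ∃ k : K, algebraMap K Ktilde k = x)
    (hreg : ∀ x : L, IsIntegral K x → ∃ k : K, algebraMap K L k = x)
    (τ : Ltilde ≃ₐ[L] Ltilde)
    (hτσ : ∀ x : Ktilde, τ (algebraMap Ktilde Ltilde x) = algebraMap Ktilde Ltilde (σ x))
    (M : IntermediateField L Ltilde)
    (hM : ∀ x : Ltilde, x ∈ M ↔ τ x = x) :
    (∀ x : Ltilde, x ∈ M → IsIntegral K x → ∃ k : K, algebraMap K Ltilde k = x) ∧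
      (∀ n : ℕ, 1 ≤ n →
        ∃! E : IntermediateField M Ltilde, Module.finrank M E = n) := by
  classical
  haveI : Algebra.IsAlgebraic L Ltilde := IsAlgClosure.isAlgebraic
  haveI : Algebra.IsAlgebraic K Ktilde := IsAlgClosure.isAlgebraic
  haveI : IsAlgClosed Ltilde := IsAlgClosure.isAlgClosed L
  haveI : IsAlgClosed Ktilde := IsAlgClosure.isAlgClosed K
  set ι : Ktilde →+* Ltilde := algebraMap Ktilde Ltilde with hι
  -- Every element of `Ltilde` integral over `K` comes from `Ktilde`.
  have hdown : ∀ x : Ltilde, IsIntegral K x → ∃ y : Ktilde, ι y = x := by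
    intro x hx
    have hf0 : minpoly K x ≠ 0 := minpoly.ne_zero hx
    have hsp : ((minpoly K x).map (algebraMap K Ktilde)).Splits :=
      IsAlgClosed.splits _
    have hroot : x ∈ ((minpoly K x).map (algebraMap K Ltilde)).roots := by
      rw [mem_roots']
      constructor
      · exact (Polynomial.map_ne_zero_iff (algebraMap K Ltilde).injective).2 hf0
      · rw [IsRoot, eval_map, ← aeval_def]
        exact minpoly.aeval K x
    rw [IsScalarTower.algebraMap_eq K Ktilde Ltilde, ← Polynomial.map_map,
      hsp.roots_map _, Multiset.mem_map] at hroot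
    obtain ⟨y, _, hy⟩ := hroot
    exact ⟨y, hy⟩
  have hpart1 : ∀ x : Ltilde, x ∈ M → IsIntegral K x → ∃ k : K, algebraMap K Ltilde k = x := by
    intro x hxM hx
    obtain ⟨y, rfl⟩ := hdown x hx
    have hyfix : σ y = y := by
      apply ι.injective
      rw [← hτσ y]
      exact (hM _).1 hxM
    obtain ⟨k, hk⟩ := hσ y hyfix
    exact ⟨k, by rw [IsScalarTower.algebraMap_apply K Ktilde Ltilde, hk]⟩
  refine ⟨hpart1, ?_⟩
  -- instances for `M`
  haveI : IsScalarTower K ↥M Ltilde := IsScalarTower.of_algebraMap_eq fun k => rfl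
  haveI : Algebra.IsAlgebraic ↥M Ltilde := Algebra.IsAlgebraic.tower_top (K := L) ↥M
  haveI : IsAlgClosure ↥M Ltilde := ⟨inferInstance, inferInstance⟩
  haveI : Normal ↥M Ltilde := IsAlgClosure.normal ↥M Ltilde
  -- `M` is a perfect field
  haveI hperfM : PerfectField ↥M := by
    obtain ⟨p, hp⟩ := ExpChar.exists ↥M
    haveI := hp
    haveI : ExpChar Ltilde p :=
      expChar_of_injective_algebraMap (algebraMap ↥M Ltilde).injective p
    haveI : PerfectRing ↥M p := by
      refine PerfectRing.ofSurjective _ _ fun y => ?_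
      obtain ⟨x, hx⟩ := IsAlgClosed.exists_pow_nat_eq (y : Ltilde) (expChar_pos ↥M p)
      have hxM : x ∈ M := by
        rw [hM]
        apply frobenius_inj Ltilde p
        rw [frobenius_def, frobenius_def, ← map_pow, hx]
        exact (hM _).1 y.2
      refine ⟨⟨x, hxM⟩, ?_⟩
      apply Subtype.ext
      rw [frobenius_def]
      push_cast
      exact hx
    exact PerfectRing.toPerfectField ↥M p
  haveI : Algebra.IsSeparable ↥M Ltilde := inferInstance
  -- `τ` as an `M`-algebra automorphism
  let τM : Ltilde ≃ₐ[↥M] Ltilde :=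
    { τ.toRingEquiv with commutes' := fun r => (hM r).1 r.2 }
  have hτMapp : ∀ x : Ltilde, τM x = τ x := fun _ => rfl
  have hσM : ∀ x : Ltilde, τM x = x → x ∈ (⊥ : IntermediateField ↥M Ltilde) := by
    intro x hx
    rw [IntermediateField.mem_bot]
    exact ⟨⟨x, (hM x).2 hx⟩, rfl⟩
  have hσK : ∀ x : Ktilde, σ x = x → x ∈ (⊥ : IntermediateField K Ktilde) := by
    intro x hx
    rw [IntermediateField.mem_bot]
    obtain ⟨k, hk⟩ := hσ x hx
    exact ⟨k, hk⟩
  intro n hn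
  have hnpos : 0 < n := hn
  -- ### Uniqueness
  have main_uniq : ∀ E₀ E₂ : IntermediateField ↥M Ltilde,
      Module.finrank ↥M E₀ = n → Module.finrank ↥M E₂ = n → E₀ = E₂ := by
    intro E₀ E₂ h₀ h₂
    haveI : FiniteDimensional ↥M E₀ := FiniteDimensional.of_finrank_pos (by rw [h₀]; exact hnpos)
    haveI : FiniteDimensional ↥M E₂ := FiniteDimensional.of_finrank_pos (by rw [h₂]; exact hnpos)
    set S : IntermediateField ↥M Ltilde := E₀ ⊔ E₂ with hS
    haveI : FiniteDimensional ↥M ↥S := IntermediateField.finiteDimensional_sup E₀ E₂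
    set F : IntermediateField ↥M Ltilde := normalClosure ↥M ↥S Ltilde with hF
    haveI : FiniteDimensional ↥M ↥F := normalClosure.is_finiteDimensional ↥M ↥S Ltilde
    haveI : Normal ↥M ↥F := normalClosure.normal ↥M ↥S Ltilde
    haveI : Algebra.IsSeparable ↥M ↥F :=
      Algebra.isSeparable_tower_bot_of_isSeparable ↥M ↥F Ltilde
    haveI : IsGalois ↥M ↥F := ⟨⟩
    have hE₀F : E₀ ≤ F := le_trans le_sup_left (IntermediateField.le_normalClosure S)
    have hE₂F : E₂ ≤ F := le_trans le_sup_right (IntermediateField.le_normalClosure S)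
    set g : ↥F ≃ₐ[↥M] ↥F := AlgEquiv.restrictNormal τM F with hg
    have hgen := aux_zpowers_eq_top τM hσM F
    haveI : IsCyclic (↥F ≃ₐ[↥M] ↥F) := by
      refine ⟨⟨g, fun x => ?_⟩⟩
      show x ∈ Subgroup.zpowers g
      rw [hg, hgen]
      exact Subgroup.mem_top x
    -- pulling back and pushing forward along `F.val`
    have keymc : ∀ E : IntermediateField ↥M Ltilde, E ≤ F →
        (E.comap F.val).map F.val = E := by
      intro E hEF
      apply SetLike.ext'
      rw [IntermediateField.coe_map]
      ext x
      constructor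
      · rintro ⟨y, hy, rfl⟩
        exact hy
      · intro hx
        exact ⟨⟨x, hEF hx⟩, hx, rfl⟩
    have keyfr : ∀ E : IntermediateField ↥M Ltilde, E ≤ F →
        Module.finrank ↥M ↥(E.comap F.val) = Module.finrank ↥M ↥E := by
      intro E hEF
      have h1 := (IntermediateField.equivMap (E.comap F.val) F.val).toLinearEquiv.finrank_eq
      rw [keymc E hEF] at h1
      exact h1
    -- cardinality of fixing subgroups
    have keycard : ∀ E : IntermediateField ↥M Ltilde, (hEF : E ≤ F) →
        (Module.finrank ↥M E = n) →
        Nat.card (IntermediateField.fixingSubgroup (E.comap F.val)) * n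
          = Module.finrank ↥M ↥F := by
      intro E hEF hEn
      haveI : IsGalois ↥(E.comap F.val) ↥F := IsGalois.tower_top_of_isGalois ↥M _ ↥F
      have h1 : Nat.card (IntermediateField.fixingSubgroup (E.comap F.val))
          = Module.finrank ↥(E.comap F.val) ↥F := by
        rw [Nat.card_congr (IntermediateField.fixingSubgroupEquiv (E.comap F.val)).toEquiv]
        exact IsGalois.card_aut_eq_finrank _ _

      rw [h1, mul_comm, ← Module.finrank_mul_finrank ↥M ↥(E.comap F.val) ↥F,
        (keyfr E hEF).trans hEn]
    have hc := (keycard E₀ hE₀F h₀).trans (keycard E₂ hE₂F h₂).symm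
    have hcc : Nat.card (IntermediateField.fixingSubgroup (E₀.comap F.val))
        = Nat.card (IntermediateField.fixingSubgroup (E₂.comap F.val)) :=
      Nat.eq_of_mul_eq_mul_right hnpos hc
    have hsub := aux_subgroup_eq_of_card_eq _ _ hcc
    have hff := congrArg IntermediateField.fixedField hsub
    rw [IsGalois.fixedField_fixingSubgroup (E₀.comap F.val),
      IsGalois.fixedField_fixingSubgroup (E₂.comap F.val)] at hff
    have hmm := congrArg (IntermediateField.map F.val) hff
    rwa [keymc E₀ hE₀F, keymc E₂ hE₂F] at hmm

  -- ### Existence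
  obtain ⟨EK, hEKn, hEKu⟩ := huniq n hn
  have hEKu' : ∀ E : IntermediateField K Ktilde, Module.finrank K E = n → E = EK :=
    fun E h => hEKu E h
  haveI : FiniteDimensional K EK :=
    FiniteDimensional.of_finrank_pos (by rw [hEKn]; exact hnpos)
  haveI : Algebra.IsSeparable K ↥EK :=
    Algebra.isSeparable_tower_bot_of_isSeparable K ↥EK Ktilde
  obtain ⟨α0, hα0⟩ := Field.exists_primitive_element K ↥EK
  set a : Ktilde := (α0 : Ktilde) with haa
  have ha : IsIntegral K a := (IsIntegral.of_finite K α0).map EK.val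
  have hKa : K⟮a⟯ = EK := by
    have h1 : (IntermediateField.adjoin K ({α0} : Set ↥EK)).map EK.val = K⟮a⟯ := by
      rw [IntermediateField.adjoin_map, Set.image_singleton]
      rfl
    rw [hα0] at h1
    rw [← h1]
    apply SetLike.ext'
    rw [IntermediateField.coe_map, IntermediateField.coe_top, Set.image_univ]
    exact Subtype.range_val
  have hfinKa : Module.finrank K ↥K⟮a⟯ = n := by rw [hKa]; exact hEKn
  have hdeg : (minpoly K a).natDegree = n :=
    (IntermediateField.adjoin.finrank ha).symm.trans hfinKa
  haveI : Normal K Ktilde := IsAlgClosure.normal K Ktilde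
  have hconj : ∀ ψ : Ktilde ≃ₐ[K] Ktilde, K⟮ψ a⟯ = K⟮a⟯ := by
    intro ψ
    have h2 : K⟮ψ a⟯ = EK := by
      apply hEKu'
      rw [IntermediateField.adjoin.finrank (show IsIntegral K (ψ a) from ha.map ψ.toAlgHom),
        minpoly.algEquiv_eq, hdeg]
    rw [h2, hKa]
  haveI hnorm : Normal K ↥K⟮a⟯ := by
    rw [IntermediateField.normal_iff_forall_map_le']
    intro ψ
    have h3 : K⟮a⟯.map (ψ : Ktilde →ₐ[K] Ktilde) = K⟮ψ a⟯ := by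
      rw [IntermediateField.adjoin_map, Set.image_singleton]
      rfl
    rw [h3, hconj ψ]
  haveI : FiniteDimensional K ↥K⟮a⟯ :=
    FiniteDimensional.of_finrank_pos (by rw [hfinKa]; exact hnpos)
  haveI : IsGalois K ↥K⟮a⟯ := ⟨⟩
  set s : ↥K⟮a⟯ ≃ₐ[K] ↥K⟮a⟯ := AlgEquiv.restrictNormal σ K⟮a⟯ with hs
  have hgenK := aux_zpowers_eq_top σ hσK K⟮a⟯
  have hords : orderOf s = n := by
    rw [orderOf_eq_card_of_forall_mem_zpowers (fun x => hgenK ▸ Subgroup.mem_top x)]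
    exact (IsGalois.card_aut_eq_finrank K K⟮a⟯).trans hfinKa
  -- the powers of `σ` move `a` to `n` distinct conjugates
  have hsa : ∀ i : ℕ, ((s ^ i) (IntermediateField.AdjoinSimple.gen K a) : Ktilde) = (σ ^ i) a := by
    intro i
    induction i with
    | zero => simp
    | succ i ih =>
      have hc := AlgEquiv.restrictNormal_commutes σ K⟮a⟯
        ((s ^ i) (IntermediateField.AdjoinSimple.gen K a))
      rw [← hs] at hc
      calc (((s ^ (i + 1)) (IntermediateField.AdjoinSimple.gen K a) : ↥K⟮a⟯) : Ktilde)
          = ((s ((s ^ i) (IntermediateField.AdjoinSimple.gen K a)) : ↥K⟮a⟯) : Ktilde) := by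
            rw [pow_succ', AlgEquiv.mul_apply]
        _ = σ (((s ^ i) (IntermediateField.AdjoinSimple.gen K a) : ↥K⟮a⟯) : Ktilde) := hc
        _ = σ ((σ ^ i) a) := by rw [ih]
        _ = (σ ^ (i + 1)) a := by rw [pow_succ', AlgEquiv.mul_apply]
  have hdistinct : ∀ i j : ℕ, i < n → j < n → (σ ^ i) a = (σ ^ j) a → i = j := by
    have main : ∀ i j : ℕ, i ≤ j → j < n → (σ ^ i) a = (σ ^ j) a → i = j := by
      intro i j hij hj heq
      by_contra hne
      have hd : 0 < j - i := by omega
      have h4 : (σ ^ (j - i)) a = a := by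
        apply (σ ^ i).injective
        have : (σ ^ i) ((σ ^ (j - i)) a) = (σ ^ j) a := by
          rw [← AlgEquiv.mul_apply, ← pow_add, show i + (j - i) = j by omega]
        rw [this, heq]
      have h5 : (s ^ (j - i)) (IntermediateField.AdjoinSimple.gen K a)
          = IntermediateField.AdjoinSimple.gen K a := by
        apply Subtype.ext
        rw [hsa, h4]
        rfl
      have h6 : (s ^ (j - i)) = 1 := by
        have h7 : ((s ^ (j - i) : ↥K⟮a⟯ ≃ₐ[K] ↥K⟮a⟯) : ↥K⟮a⟯ →ₐ[K] ↥K⟮a⟯)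
            = AlgHom.id K ↥K⟮a⟯ := by
          apply (IntermediateField.adjoin.powerBasis ha).algHom_ext
          rw [IntermediateField.adjoin.powerBasis_gen]
          simpa using h5
        ext x
        have := congrArg (fun f : ↥K⟮a⟯ →ₐ[K] ↥K⟮a⟯ => f x) h7
        simpa using this
      have h8 : orderOf s ∣ (j - i) := orderOf_dvd_of_pow_eq_one h6
      rw [hords] at h8
      have := Nat.le_of_dvd hd h8
      omega
    intro i j hi hj heq
    rcases le_total i j with h | h
    · exact main i j h hj heq
    · exact (main j i h hi heq.symm).symm
  -- transfer to `Ltilde`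
  set b : Ltilde := ι a with hb
  have hbK : IsIntegral K b := ha.map (IsScalarTower.toAlgHom K Ktilde Ltilde)
  have hbint : IsIntegral ↥M b := hbK.tower_top
  have hτpow : ∀ (i : ℕ) (x : Ktilde), (τM ^ i) (ι x) = ι ((σ ^ i) x) := by
    intro i x
    induction i with
    | zero => simp
    | succ i ih =>
      rw [pow_succ', pow_succ', AlgEquiv.mul_apply, AlgEquiv.mul_apply, ih]
      exact hτσ _
  set gpoly : Polynomial ↥M := minpoly ↥M b with hgp
  have hgdvd : gpoly ∣ (minpoly K a).map (algebraMap K ↥M) := by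
    apply minpoly.dvd
    rw [Polynomial.aeval_map_algebraMap]
    have h9 : minpoly K b = minpoly K a := minpoly.algebraMap_eq ι.injective a
    rw [← h9]
    exact minpoly.aeval K b
  have hgne : gpoly ≠ 0 := minpoly.ne_zero hbint
  have hfne : (minpoly K a).map (algebraMap K ↥M) ≠ 0 :=
    (Polynomial.map_ne_zero_iff (algebraMap K ↥M).injective).2 (minpoly.ne_zero ha)
  have hdegle : gpoly.natDegree ≤ n := by
    have := Polynomial.natDegree_le_of_dvd hgdvd hfne
    rwa [natDegree_map, hdeg] at this
  have hrootmem : ∀ i : ℕ, ((τM ^ i) b) ∈ (gpoly.map (algebraMap ↥M Ltilde)).roots := by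
    intro i
    rw [mem_roots']
    refine ⟨(Polynomial.map_ne_zero_iff (algebraMap ↥M Ltilde).injective).2 hgne, ?_⟩
    rw [IsRoot, eval_map, ← aeval_def]
    have h10 : minpoly ↥M ((τM ^ i) b) = gpoly := minpoly.algEquiv_eq (τM ^ i) b
    rw [← h10]
    exact minpoly.aeval _ _
  have hdegge : n ≤ gpoly.natDegree := by
    have hinj : Set.InjOn (fun i : ℕ => (τM ^ i) b) (Finset.range n) := by
      intro i hi j hj hij
      simp only [Finset.coe_range, Set.mem_Iio] at hi hj
      apply hdistinct i j hi hj
      apply ι.injective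
      rw [← hτpow, ← hτpow]
      exact hij
    calc n = ((Finset.range n).image (fun i : ℕ => (τM ^ i) b)).card := by
            rw [Finset.card_image_of_injOn hinj, Finset.card_range]
      _ ≤ (gpoly.map (algebraMap ↥M Ltilde)).roots.toFinset.card := by
            apply Finset.card_le_card
            intro x hx
            rw [Finset.mem_image] at hx
            obtain ⟨i, _, rfl⟩ := hx
            rw [Multiset.mem_toFinset]
            exact hrootmem i
      _ ≤ Multiset.card (gpoly.map (algebraMap ↥M Ltilde)).roots :=
            Multiset.toFinset_card_le _
      _ ≤ (gpoly.map (algebraMap ↥M Ltilde)).natDegree := Polynomial.card_roots' _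
      _ = gpoly.natDegree := natDegree_map _
  have hE : Module.finrank ↥M ↥(IntermediateField.adjoin ↥M {b}) = n := by
    rw [IntermediateField.adjoin.finrank hbint, ← hgp]
    omega
  exact ⟨IntermediateField.adjoin ↥M {b}, hE, fun E' hE' => main_uniq E' _ hE' hE⟩
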